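/- No cancellation under a parity condition: let I, J ⊆ [n] with I ∩ J = ∅, I ∪ J = [n], J nonempty, and I', J' ⊆ [n] with I' ∩ J' = ∅, I' ∪ J' = [n], J' nonempty, and suppose n₁ = |I| and n₁' = |I'| have different parities. Then the Boolean function f : 𝔽₂ⁿ → 𝔽₂ defined by f(a) = (∏_{i ∈ I} a_i)(∑_{j ∈ J} a_j) + (∏_{i ∈ I'} a_i)(∑_{j ∈ J'} a_j) has Hamming weight w_H(f) = 2^{n − n₁ − 1} + 2^{n − n₁' − 1}. -/

import Mathlib

lemma zmod2_mul_eq_one_iff : ∀ x y : ZMod 2, x * y = 1 ↔ x = 1 ∧ y = 1 := by decide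

lemma zmod2_add_eq_one_iff : ∀ x y : ZMod 2, ¬(x = 1 ∧ y = 1) →
    (x + y = 1 ↔ (x = 1 ∨ y = 1)) := by decide

lemma zmod2_prod_eq_one_iff {n : ℕ} (s : Finset (Fin n)) (a : Fin n → ZMod 2) :
    ∏ i ∈ s, a i = 1 ↔ ∀ i ∈ s, a i = 1 := by
  constructor
  · intro h i hi
    by_contra hne
    have h0 : a i = 0 := by
      have : ∀ x : ZMod 2, x ≠ 1 → x = 0 := by decide
      exact this _ hne
    rw [Finset.prod_eq_zero hi h0] at h
    exact zero_ne_one h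
  · exact Finset.prod_eq_one

lemma count_one {n : ℕ} (I J : Finset (Fin n)) (hIJ : Disjoint I J)
    (hU : I ∪ J = Finset.univ) (hJ : J.Nonempty) :
    (Finset.univ.filter fun a : Fin n → ZMod 2 =>
      (∏ i ∈ I, a i) * (∑ j ∈ J, a j) = 1).card = 2 ^ (n - I.card - 1) := by
  obtain ⟨j₀, hj₀⟩ := hJ
  have hj₀I : j₀ ∉ I := fun h => Finset.disjoint_left.mp hIJ h hj₀
  have hcardsum : I.card + J.card = n := by
    rw [← Finset.card_union_of_disjoint hIJ, hU, Finset.card_univ, Fintype.card_fin]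
  have hJc : 1 ≤ J.card := Finset.card_pos.mpr ⟨j₀, hj₀⟩
  set T : Finset (Fin n → ZMod 2) :=
    Finset.univ.filter (fun a => ∀ i ∈ I, a i = 1) with hTdef
  have hTcard : T.card = 2 ^ (n - I.card) := by
    have hpi : T = Fintype.piFinset
        (fun i => if i ∈ I then ({1} : Finset (ZMod 2)) else Finset.univ) := by
      ext a
      simp only [hTdef, Finset.mem_filter, Finset.mem_univ, true_and,
        Fintype.mem_piFinset]
      constructor
      · intro h i
        split_ifs with hi
        · simpa using h i hi
        · simp
      · intro h i hi
        have := h i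
        rw [if_pos hi] at this
        simpa using this
    rw [hpi, Fintype.card_piFinset]
    have : ∀ i : Fin n,
        ((if i ∈ I then ({1} : Finset (ZMod 2)) else Finset.univ)).card
          = if i ∈ I then 1 else 2 := by
      intro i; split_ifs <;> simp
    simp only [this]
    rw [Finset.prod_ite]
    simp only [Finset.prod_const, one_pow, one_mul]
    congr 1
    rw [Finset.filter_not]
    simp [Finset.card_sdiff_of_subset (Finset.filter_subset _ _),
      Finset.card_sdiff_of_subset (Finset.subset_univ I)]
  -- rewrite the target filter as a filter of T
  have hfe : (Finset.univ.filter fun a : Fin n → ZMod 2 =>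
      (∏ i ∈ I, a i) * (∑ j ∈ J, a j) = 1)
      = T.filter (fun a => ∑ j ∈ J, a j = 1) := by
    rw [hTdef, Finset.filter_filter]
    ext a
    simp only [Finset.mem_filter, Finset.mem_univ, true_and]
    rw [zmod2_mul_eq_one_iff, zmod2_prod_eq_one_iff]
  -- involution: flipping at j₀ adds 1 to the J-sum and stays in T
  have hflipT : ∀ a ∈ T, Function.update a j₀ (a j₀ + 1) ∈ T := by
    intro a ha
    simp only [hTdef, Finset.mem_filter, Finset.mem_univ, true_and] at ha ⊢
    intro i hi
    have hne : i ≠ j₀ := by rintro rfl; exact hj₀I hi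
    rw [Function.update_of_ne hne]
    exact ha i hi
  have hsum : ∀ a : Fin n → ZMod 2,
      ∑ j ∈ J, Function.update a j₀ (a j₀ + 1) j = (∑ j ∈ J, a j) + 1 := by
    intro a
    rw [Finset.sum_update_of_mem hj₀, ← Finset.add_sum_erase J a hj₀,
      Finset.sdiff_singleton_eq_erase]
    ring
  have hinv : ∀ a : Fin n → ZMod 2,
      Function.update (Function.update a j₀ (a j₀ + 1)) j₀
        (Function.update a j₀ (a j₀ + 1) j₀ + 1) = a := by
    intro a
    ext i
    by_cases hi : i = j₀
    · subst hi
      simp only [Function.update_self]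
      have : ∀ x : ZMod 2, x + 1 + 1 = x := by decide
      exact this _
    · simp [Function.update_of_ne hi]
  have hbij : (T.filter (fun a => ∑ j ∈ J, a j = 1)).card
      = (T.filter (fun a => ¬ (∑ j ∈ J, a j = 1))).card := by
    apply Finset.card_nbij' (fun a => Function.update a j₀ (a j₀ + 1))
      (fun a => Function.update a j₀ (a j₀ + 1))
    · intro a ha
      simp only [Finset.mem_coe, Finset.mem_filter] at ha ⊢
      refine ⟨hflipT a ha.1, ?_⟩
      rw [hsum, ha.2]
      decide
    · intro a ha
      simp only [Finset.mem_coe, Finset.mem_filter] at ha ⊢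
      refine ⟨hflipT a ha.1, ?_⟩
      rw [hsum]
      have h0 : ∑ j ∈ J, a j = 0 := by
        have : ∀ x : ZMod 2, x ≠ 1 → x = 0 := by decide
        exact this _ ha.2
      rw [h0]; decide
    · intro a _; exact hinv a
    · intro a _; exact hinv a
  have hsplit := Finset.card_filter_add_card_filter_not
    (s := T) (p := fun a => ∑ j ∈ J, a j = 1)
  rw [hfe]
  have hpow : 2 ^ (n - I.card) = 2 * 2 ^ (n - I.card - 1) := by
    have h1 : 1 ≤ n - I.card := by clear * - hcardsum hJc; omega
    rw [← pow_succ']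
    congr 1
    clear * - h1; omega
  have key : 2 * (Finset.filter (fun a => ∑ j ∈ J, a j = 1) T).card
      = 2 ^ (n - I.card) := by
    rw [two_mul]
    nth_rewrite 2 [hbij]
    rw [hsplit, hTcard]
  rw [hpow] at key
  exact Nat.eq_of_mul_eq_mul_left (by norm_num) key


/-- The Hamming weight of a Boolean function. -/
def hammingWeight {n : ℕ} (f : (Fin n → ZMod 2) → ZMod 2) : ℕ :=
  (Finset.univ.filter fun a : Fin n → ZMod 2 => f a = 1).card

/-- no cancellation under a parity condition. If `I ⊔ J = [n]`,
`I' ⊔ J' = [n]` with `J, J'` nonempty and `|I| = n₁`, `|I'| = n₁'` of different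
parities, then `a ↦ (∏_{i ∈ I} a_i)(∑_{j ∈ J} a_j) + (∏_{i ∈ I'} a_i)(∑_{j ∈ J'} a_j)`
has Hamming weight `2^{n - n₁ - 1} + 2^{n - n₁' - 1}`. -/
theorem weight_sum_factored_different_parity {n : ℕ} (I J I' J' : Finset (Fin n))
    (hIJ : Disjoint I J) (hIJunion : I ∪ J = Finset.univ) (hJ : J.Nonempty)
    (hIJ' : Disjoint I' J') (hIJunion' : I' ∪ J' = Finset.univ) (hJ' : J'.Nonempty)
    (n₁ n₁' : ℕ) (hn₁ : I.card = n₁) (hn₁' : I'.card = n₁')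
    (hpar : n₁ % 2 ≠ n₁' % 2) :
    hammingWeight (fun a : Fin n → ZMod 2 =>
        (∏ i ∈ I, a i) * (∑ j ∈ J, a j) + (∏ i ∈ I', a i) * (∑ j ∈ J', a j)) =
      2 ^ (n - n₁ - 1) + 2 ^ (n - n₁' - 1) := by
  subst hn₁ hn₁'
  have hnotboth : ∀ a : Fin n → ZMod 2,
      ¬((∏ i ∈ I, a i) * (∑ j ∈ J, a j) = 1 ∧
        (∏ i ∈ I', a i) * (∑ j ∈ J', a j) = 1) := by
    rintro a ⟨h1, h2⟩
    rw [zmod2_mul_eq_one_iff, zmod2_prod_eq_one_iff] at h1 h2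
    have htot : ∀ (K L : Finset (Fin n)), Disjoint K L → K ∪ L = Finset.univ →
        (∀ i ∈ K, a i = 1) → (∑ j ∈ L, a j = 1) →
        ∑ i : Fin n, a i = (K.card : ZMod 2) + 1 := by
      intro K L hd hu hK hL
      rw [← hu, Finset.sum_union hd, hL, Finset.sum_congr rfl hK]
      simp
    have e1 := htot I J hIJ hIJunion h1.1 h1.2
    have e2 := htot I' J' hIJ' hIJunion' h2.1 h2.2
    rw [e1] at e2
    have : (I.card : ZMod 2) = (I'.card : ZMod 2) := by
      have := add_right_cancel e2
      exact this
    rw [ZMod.natCast_eq_natCast_iff'] at this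
    exact hpar this
  unfold hammingWeight
  have hsplit : (Finset.univ.filter fun a : Fin n → ZMod 2 =>
        (∏ i ∈ I, a i) * (∑ j ∈ J, a j) + (∏ i ∈ I', a i) * (∑ j ∈ J', a j) = 1)
      = (Finset.univ.filter fun a : Fin n → ZMod 2 =>
          (∏ i ∈ I, a i) * (∑ j ∈ J, a j) = 1)
        ∪ (Finset.univ.filter fun a : Fin n → ZMod 2 =>
          (∏ i ∈ I', a i) * (∑ j ∈ J', a j) = 1) := by
    ext a
    simp only [Finset.mem_filter, Finset.mem_union, Finset.mem_univ, true_and]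
    exact zmod2_add_eq_one_iff _ _ (hnotboth a)
  rw [hsplit, Finset.card_union_of_disjoint, count_one I J hIJ hIJunion hJ,
    count_one I' J' hIJ' hIJunion' hJ']
  rw [Finset.disjoint_left]
  intro a ha ha'
  simp only [Finset.mem_filter, Finset.mem_univ, true_and] at ha ha'
  exact hnotboth a ⟨ha, ha'⟩
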